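/- Let (p_n) and (q_n) be Nörlund sequences with comparison matrix C_{pq} given by c_{m,n} = k_{m-n} P_n / Q_m (n ≤ m), 0 otherwise. If (N,q) includes (N,p) (every (N,p)-convergent sequence is (N,q)-convergent to the same limit), then C_{pq} is regular: for every convergent sequence s → σ, the sequence t_m = Σ_{n=0}^m c_{m,n} s_n converges to σ. -/

import Mathlib

open Finset PowerSeries

/-- Solve the triangular system `∑_{j≤n} p (n-j) * r j = P n * s n` recursively. -/
noncomputable def normR (p P s : ℕ → ℝ) : ℕ → ℝ
  | n => (P n * s n - ∑ j ∈ (Finset.range n).attach,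
      p (n - j.1) * normR p P s j.1) / p 0
  decreasing_by exact Finset.mem_range.1 j.2

lemma normR_spec (p P s : ℕ → ℝ) (hp0 : p 0 ≠ 0) (n : ℕ) :
    ∑ j ∈ Finset.range (n + 1), p (n - j) * normR p P s j = P n * s n := by
  rw [Finset.sum_range_succ, Nat.sub_self]
  have h : normR p P s n
      = (P n * s n - ∑ j ∈ Finset.range n, p (n - j) * normR p P s j) / p 0 := by
    rw [normR, Finset.sum_attach (Finset.range n) (fun j => p (n - j) * normR p P s j)]
  rw [h]
  field_simp
  ring

lemma coeff_mul_mk (a b : ℕ → ℝ) (n : ℕ) :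
    (PowerSeries.coeff (R := ℝ) n) (PowerSeries.mk a * PowerSeries.mk b)
      = ∑ j ∈ Finset.range (n + 1), a j * b (n - j) := by
  rw [PowerSeries.coeff_mul, Finset.Nat.sum_antidiagonal_eq_sum_range_succ_mk]
  simp

lemma sum_reflect' (f g : ℕ → ℝ) (n : ℕ) :
    ∑ j ∈ Finset.range (n + 1), f (n - j) * g j
      = ∑ j ∈ Finset.range (n + 1), f j * g (n - j) := by
  rw [← Finset.sum_range_reflect]
  apply Finset.sum_congr rfl
  intro j hj
  have hj' : j ≤ n := Nat.lt_succ_iff.mp (Finset.mem_range.mp hj)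
  simp [Nat.succ_sub_succ, Nat.sub_sub_self hj']

theorem inclusion_implies_matrix_regular
    (p q k : ℕ → ℝ)
    (hp0 : 0 < p 0) (hp : ∀ n, 0 < n → 0 ≤ p n)
    (hq0 : 0 < q 0) (hq : ∀ n, 0 < n → 0 ≤ q n)
    (hk : ∀ n, q n = ∑ j ∈ Finset.range (n + 1), k j * p (n - j))
    (P Q : ℕ → ℝ)
    (hP : ∀ n, P n = ∑ i ∈ Finset.range (n + 1), p i)
    (hQ : ∀ n, Q n = ∑ i ∈ Finset.range (n + 1), q i)
    (c : ℕ → ℕ → ℝ)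
    (hc : ∀ m n, c m n = if n ≤ m then k (m - n) * P n / Q m else 0)
    (hincl : ∀ (r : ℕ → ℝ) (σ : ℝ),
      Filter.Tendsto
        (fun m => (∑ j ∈ Finset.range (m + 1), p (m - j) * r j) / P m)
        Filter.atTop (nhds σ) →
      Filter.Tendsto
        (fun m => (∑ j ∈ Finset.range (m + 1), q (m - j) * r j) / Q m)
        Filter.atTop (nhds σ)) :
    ∀ (s : ℕ → ℝ) (σ : ℝ), Filter.Tendsto s Filter.atTop (nhds σ) →
      Filter.Tendsto (fun m => ∑ n ∈ Finset.range (m + 1), c m n * s n)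
        Filter.atTop (nhds σ) := by
  intro s σ hs
  have hPpos : ∀ n, 0 < P n := by
    intro n
    rw [hP]
    have h0 : ∀ i ∈ Finset.range (n + 1), 0 ≤ p i := by
      intro i _
      rcases Nat.eq_zero_or_pos i with h | h
      · exact h ▸ hp0.le
      · exact hp i h
    have := Finset.single_le_sum h0 (Finset.mem_range.2 (Nat.succ_pos n))
    linarith
  set r := normR p P s with hr
  have hkey : ∀ n, ∑ j ∈ Finset.range (n + 1), p (n - j) * r j = P n * s n :=
    normR_spec p P s hp0.ne'
  -- the p-transform of r is s
  have hNp : Filter.Tendsto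
      (fun m => (∑ j ∈ Finset.range (m + 1), p (m - j) * r j) / P m)
      Filter.atTop (nhds σ) := by
    apply hs.congr
    intro m
    rw [hkey m, mul_comm, mul_div_assoc, div_self (hPpos m).ne', mul_one]
  have hNq := hincl r σ hNp
  -- power series identities
  have hpr : PowerSeries.mk p * PowerSeries.mk r
      = PowerSeries.mk (fun n => P n * s n) := by
    ext n
    rw [coeff_mul_mk, PowerSeries.coeff_mk, ← hkey n, sum_reflect']
  have hqk : PowerSeries.mk q = PowerSeries.mk k * PowerSeries.mk p := by
    ext n
    rw [coeff_mul_mk, PowerSeries.coeff_mk]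
    exact hk n
  have hconv : ∀ m, ∑ j ∈ Finset.range (m + 1), q (m - j) * r j
      = ∑ n ∈ Finset.range (m + 1), k (m - n) * (P n * s n) := by
    intro m
    have h1 : ∑ j ∈ Finset.range (m + 1), q (m - j) * r j
        = (PowerSeries.coeff (R := ℝ) m) (PowerSeries.mk q * PowerSeries.mk r) := by
      rw [coeff_mul_mk, sum_reflect']
    rw [h1, hqk, mul_assoc, hpr, coeff_mul_mk, sum_reflect']
  -- conclude
  apply hNq.congr
  intro m
  rw [hconv m]
  rw [Finset.sum_div]
  apply Finset.sum_congr rfl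
  intro n hn
  have hn' : n ≤ m := Nat.lt_succ_iff.mp (Finset.mem_range.mp hn)
  rw [hc m n, if_pos hn']
  ring
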